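/- Let F be a treemap and let f : ℕ → ℕ be a path through F(T), i.e., every finite initial segment of f belongs to F(T) = {τ | ∃ σ, τ ⊆ F(σ)}. Then for every n ∈ ℕ there exists a finite string σ such that f↾n ⊆ F(σ) and F(σ) is an initial segment of f (f↾n ⊆ F(σ) ⊂ f). -/

import Mathlib

/-- A treemap is `F : ℕ^{<ℕ} → ℕ^{<ℕ}` (strings as lists of naturals) with
`F(σ)⌢i ⊆ F(σ⌢i)` for all strings `σ` and all `i : ℕ`. -/
def Treemap (F : List ℕ → List ℕ) : Prop :=
  ∀ (σ : List ℕ) (i : ℕ), (F σ ++ [i]) <+: F (σ ++ [i])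

/-- The tree `F(T) = {τ | ∃ σ, τ ⊆ F(σ)}` determined by a treemap `F`. -/
def treeOf (F : List ℕ → List ℕ) : Set (List ℕ) :=
  {τ | ∃ σ : List ℕ, τ <+: F σ}

/-- The initial segment `f↾n = (f 0, …, f (n-1))` of `f : ℕ → ℕ`. -/
def restrict (f : ℕ → ℕ) (n : ℕ) : List ℕ :=
  (List.range n).map f

/-- `σ` is an initial segment of `f : ℕ → ℕ`. -/
def IsInitSeg (σ : List ℕ) (f : ℕ → ℕ) : Prop :=
  σ = restrict f σ.length

/-- The set of paths through the tree `F(T)` of a treemap `F`. -/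
def pathSet (F : List ℕ → List ℕ) : Set (ℕ → ℕ) :=
  {f | ∀ n : ℕ, restrict f n ∈ treeOf F}

/-- If `f` is a path through `F(T)` then for every `n` there is a string `σ` with
`f↾n ⊆ F(σ) ⊂ f`. -/
lemma restrict_length (f : ℕ → ℕ) (n : ℕ) : (restrict f n).length = n := by
  simp [restrict]

lemma restrict_getElem (f : ℕ → ℕ) (n k : ℕ) (h : k < (restrict f n).length) :
    (restrict f n)[k] = f k := by
  simp [restrict] at h ⊢

lemma restrict_take (f : ℕ → ℕ) {k m : ℕ} (h : k ≤ m) :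
    List.take k (restrict f m) = restrict f k := by
  simp [restrict, ← List.map_take, List.take_range, Nat.min_eq_left h]

lemma treemap_mono {F : List ℕ → List ℕ} (hF : Treemap F) :
    ∀ {σ τ : List ℕ}, σ <+: τ → F σ <+: F τ := by
  intro σ τ h
  obtain ⟨ρ, rfl⟩ := h
  induction ρ generalizing σ with
  | nil => simp
  | cons i ρ ih =>
      have h1 : F σ <+: F (σ ++ [i]) := (List.prefix_append _ _).trans (hF σ i)
      have h2 := ih (σ := σ ++ [i])
      have : σ ++ i :: ρ = (σ ++ [i]) ++ ρ := by simp
      rw [this]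
      exact h1.trans h2

lemma treemap_len {F : List ℕ → List ℕ} (hF : Treemap F) :
    ∀ σ : List ℕ, σ.length ≤ (F σ).length := by
  intro σ
  induction σ using List.reverseRecOn with
  | nil => exact Nat.zero_le _
  | append_singleton σ i ih =>
      have := (hF σ i).length_le
      simp only [List.length_append, List.length_singleton] at this ⊢
      omega

lemma restrict_prefix (f : ℕ → ℕ) {n m : ℕ} (h : n ≤ m) :
    restrict f n <+: restrict f m := by
  rw [← restrict_take f h]; exact List.take_prefix _ _

lemma key_lemma {F : List ℕ → List ℕ} (hF : Treemap F) (f : ℕ → ℕ) {n m : ℕ} (hm : n ≤ m) :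
    ∀ N σ, σ.length ≤ N → restrict f m <+: F σ →
      (∃ ρ, restrict f n <+: F ρ ∧ F ρ <+: restrict f m) ∨
      (∃ τ, restrict f m <+: F τ ∧ ∀ κ x, (κ ++ [x]) <+: τ → (F κ).length < n) := by
  intro N
  induction N with
  | zero =>
      intro σ hσ h
      right
      refine ⟨σ, h, fun κ x hκ => ?_⟩
      have := hκ.length_le
      simp only [List.length_append, List.length_singleton] at this
      omega
  | succ N ih =>
      intro σ hσ h
      by_cases hc : ∃ κ x, (κ ++ [x]) <+: σ ∧ n ≤ (F κ).length
      · obtain ⟨κ, x, hκ, hn⟩ := hc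
        have hκσ : κ <+: σ := (List.prefix_append _ _).trans hκ
        have hFκ : F κ <+: F σ := treemap_mono hF hκσ
        rcases List.prefix_or_prefix_of_prefix h hFκ with h1 | h1
        · have hlen : κ.length ≤ N := by
            have := hκ.length_le
            simp only [List.length_append, List.length_singleton] at this
            omega
          exact ih κ hlen h1
        · left
          refine ⟨κ, ?_, h1⟩
          refine List.prefix_of_prefix_length_le (restrict_prefix f hm) h1 ?_
          rw [restrict_length]; exact hn
      · push_neg at hc
        exact Or.inr ⟨σ, h, fun κ x hκ => hc κ x hκ⟩

theorem path_initseg_in_image' (F : List ℕ → List ℕ) (hF : Treemap F)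
    (f : ℕ → ℕ) (hf : ∀ n : ℕ, ∃ σ : List ℕ, restrict f n <+: F σ) (n : ℕ) :
    ∃ σ : List ℕ, restrict f n <+: F σ ∧ IsInitSeg (F σ) f := by
  classical
  set C := (Finset.range n).sup f with hC
  set S : Set (List ℕ) := {l | l.length ≤ n ∧ ∀ x ∈ l, x ≤ C} with hS
  have hSfin : S.Finite := by
    have h1 : {l : List (Fin (C+1)) | l.length ≤ n}.Finite := List.finite_length_le _ n
    have h2 := h1.image (fun l => l.map (Fin.val))
    refine Set.Finite.subset h2 ?_
    rintro τ ⟨hlen, hmem⟩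
    refine ⟨τ.map (fun x => (⟨min x C, by omega⟩ : Fin (C+1))), by simpa using hlen, ?_⟩
    simp only [List.map_map]
    conv_rhs => rw [← List.map_id τ]
    refine List.map_congr_left (fun x hx => ?_)
    simp [Nat.min_eq_left (hmem x hx)]
  obtain ⟨B, hB⟩ := (hSfin.image (fun τ => (F τ).length)).bddAbove
  set m := B + n + 1 with hmdef
  obtain ⟨σ, hσ⟩ := hf m
  rcases key_lemma hF f (show n ≤ m by omega) σ.length σ le_rfl hσ with
    ⟨ρ, h1, h2⟩ | ⟨τ, h1, h2⟩
  · refine ⟨ρ, h1, ?_⟩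
    have hlen : (F ρ).length ≤ m := by
      have := h2.length_le; rwa [restrict_length] at this
    have hw : F ρ = List.take (F ρ).length (restrict f m) := List.prefix_iff_eq_take.mp h2
    rw [restrict_take f hlen] at hw
    exact hw
  · exfalso
    have hτS : τ ∈ S := by
      constructor
      · rcases List.eq_nil_or_concat τ with rfl | ⟨κ, x, rfl⟩
        · simp
        · have hx : (F κ).length < n := h2 κ x (by simp [List.concat_eq_append])
          have := treemap_len hF κ
          simp only [List.concat_eq_append, List.length_append, List.length_singleton]
          omega
      · intro x hx
        obtain ⟨s, t, rfl⟩ := List.mem_iff_append.mp hx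
        have hpre : s ++ [x] <+: s ++ x :: t := ⟨t, by simp⟩
        have hℓ : (F s).length < n := h2 s x hpre
        have pre2 : F s ++ [x] <+: F (s ++ x :: t) :=
          (hF s x).trans (treemap_mono hF hpre)
        have hlenFτ : n ≤ (F (s ++ x :: t)).length := by
          have := h1.length_le; rw [restrict_length] at this; omega
        have hidx : (F s).length < (F s ++ [x]).length := by simp
        have e1 : (F s ++ [x])[(F s).length] = x :=
          List.getElem_concat_length rfl hidx
        have e2 : (F s ++ [x])[(F s).length] = (F (s ++ x :: t))[(F s).length]'(by omega) :=
          pre2.getElem hidx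
        have hidx2 : (F s).length < (restrict f m).length := by
          rw [restrict_length]; omega
        have e3 : (restrict f m)[(F s).length] = (F (s ++ x :: t))[(F s).length]'(by omega) :=
          h1.getElem hidx2
        have e4 : (restrict f m)[(F s).length]'hidx2 = f (F s).length :=
          restrict_getElem f m _ hidx2
        have : x = f (F s).length := by rw [← e4, e3, ← e2, e1]
        rw [this]
        exact Finset.le_sup (Finset.mem_range.mpr hℓ)
    have hle : (F τ).length ≤ B := hB ⟨τ, hτS, rfl⟩
    have : m ≤ (F τ).length := by
      have := h1.length_le; rwa [restrict_length] at this
    omega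

theorem path_initseg_in_image (F : List ℕ → List ℕ) (hF : Treemap F)
    (f : ℕ → ℕ) (hf : f ∈ pathSet F) (n : ℕ) :
    ∃ σ : List ℕ, restrict f n <+: F σ ∧ IsInitSeg (F σ) f :=
  path_initseg_in_image' F hF f hf n
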